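/- Let ν ∈ ℝ^d be a unit vector, V ∈ ℝ^d with c := V·ν ≥ δ > 0, let g ∈ ℝ^d be a fixed vector with |g| ≤ M, and for small ε > 0 set ν' := (cν + εg)/|cν + εg| and c' := V·ν'. Then there exists a constant C = C(δ, M, |V|) such that for all sufficiently small ε > 0: (i) |ν' − ν| ≤ Cε, and (ii) |c'ν' − cν − εg| ≤ Cε² + (ε/c)|g·W|, where W := 2(V·ν)ν − V. In particular, if g·W = 0, then |c'ν' − cν − εg| = o(ε). -/

import Mathlib

open Metric Set Filter
open scoped RealInnerProductSpace Topology

noncomputable section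

abbrev E (d : ℕ) := EuclideanSpace ℝ (Fin d)

def newDir {d : ℕ} (V ν g : E d) (ε : ℝ) : E d :=
  ‖⟪V, ν⟫ • ν + ε • g‖⁻¹ • (⟪V, ν⟫ • ν + ε • g)

lemma norm_diff_eq {d : ℕ} (ν V g : E d) (ε : ℝ)
    (hn : (0:ℝ) < ‖⟪V, ν⟫ • ν + ε • g‖) :
    ‖⟪V, newDir V ν g ε⟫ • newDir V ν g ε - ⟪V, ν⟫ • ν - ε • g‖
      = |⟪V, ⟪V, ν⟫ • ν + ε • g⟫ - ‖⟪V, ν⟫ • ν + ε • g‖ ^ 2|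
        / ‖⟪V, ν⟫ • ν + ε • g‖ := by
  set u : E d := ⟪V, ν⟫ • ν + ε • g with hu
  set n : ℝ := ‖u‖ with hndef
  have hn' : n ≠ 0 := ne_of_gt hn
  have h1 : ⟪V, newDir V ν g ε⟫ • newDir V ν g ε - ⟪V, ν⟫ • ν - ε • g
      = ((⟪V, u⟫ - n ^ 2) / n ^ 2) • u := by
    rw [sub_sub, ← hu]
    have : newDir V ν g ε = n⁻¹ • u := rfl
    rw [this, real_inner_smul_right, smul_smul]
    have h2 : n⁻¹ * ⟪V, u⟫ * n⁻¹ = ⟪V, u⟫ / n ^ 2 := by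
      rw [div_eq_mul_inv, pow_two, mul_inv]; ring
    rw [h2]
    rw [sub_div, div_self (by positivity : (n:ℝ)^2 ≠ 0), sub_smul, one_smul]
  rw [h1, norm_smul]
  rw [Real.norm_eq_abs, abs_div, abs_of_pos (by positivity : (0:ℝ) < n ^ 2)]
  rw [← hndef]
  field_simp

lemma numerator_eq {d : ℕ} (ν V g W : E d) (hν : ‖ν‖ = 1)
    (hW : W = (2 * ⟪V, ν⟫) • ν - V) (ε : ℝ) :
    ⟪V, ⟪V, ν⟫ • ν + ε • g⟫ - ‖⟪V, ν⟫ • ν + ε • g‖ ^ 2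
      = -(ε * ⟪g, W⟫ + ε ^ 2 * ‖g‖ ^ 2) := by
  have e1 : ⟪V, ⟪V, ν⟫ • ν + ε • g⟫ = ⟪V, ν⟫ * ⟪V, ν⟫ + ε * ⟪V, g⟫ := by
    rw [inner_add_right, real_inner_smul_right, real_inner_smul_right]
  have e2 : ‖⟪V, ν⟫ • ν + ε • g‖ ^ 2
      = ⟪V, ν⟫ ^ 2 + 2 * (⟪V, ν⟫ * (ε * ⟪ν, g⟫)) + ε ^ 2 * ‖g‖ ^ 2 := by
    rw [norm_add_sq_real, norm_smul, norm_smul, real_inner_smul_left,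
      real_inner_smul_right, hν]
    simp [Real.norm_eq_abs, mul_pow, sq_abs]
  have e3 : ⟪g, W⟫ = 2 * ⟪V, ν⟫ * ⟪ν, g⟫ - ⟪V, g⟫ := by
    rw [hW, inner_sub_right, real_inner_smul_right, real_inner_comm g ν,
      real_inner_comm g V]
  rw [e1, e2, e3]; ring

lemma arith0 (δ M Vn C : ℝ) (hδ : 0 < δ) (hM : 0 ≤ M) (hVn : δ ≤ Vn)
    (hC : 4*(M+1) + 8*(M+1)^2*(Vn+1) ≤ C*δ^2) : 0 < C := by
  nlinarith [sq_nonneg (M+1), sq_nonneg δ, mul_pos hδ hδ]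

lemma arith1 (δ M Vn G C ε n : ℝ) (hδ : 0 < δ) (hG0 : 0 ≤ G) (hGM : G ≤ M)
    (hVn : δ ≤ Vn) (hn : δ/2 ≤ n) (hε : 0 < ε)
    (hC : 4*(M+1) + 8*(M+1)^2*(Vn+1) ≤ C*δ^2) : 2*(ε*G) ≤ C*ε*n := by
  have hM0 : 0 ≤ M := hG0.trans hGM
  have hC0 : 0 < C := arith0 δ M Vn C hδ hM0 hVn hC
  have h1 : C*ε*(δ/2) ≤ C*ε*n := mul_le_mul_of_nonneg_left hn (by positivity)
  have hGδ : G*δ ≤ M*Vn := mul_le_mul hGM hVn hδ.le hM0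
  have h2 : 4*G*δ ≤ C*δ^2 := by nlinarith [mul_nonneg hM0 (hδ.le.trans hVn), sq_nonneg (M+1)]
  nlinarith [mul_le_mul_of_nonneg_right h2 hε.le]

lemma arith2 (δ M Vn c n A G C ε : ℝ) (hδ : 0 < δ) (hc : δ ≤ c) (hcV : c ≤ Vn)
    (hG0 : 0 ≤ G) (hGM : G ≤ M) (hA0 : 0 ≤ A) (hA : A ≤ 3*M*Vn)
    (hn : δ/2 ≤ n) (hnlow : c - ε*G ≤ n) (hε : 0 < ε)
    (hC : 4*(M+1) + 8*(M+1)^2*(Vn+1) ≤ C*δ^2) :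
    ε*A + ε^2*G^2 ≤ (C*ε^2 + ε/c*A)*n := by
  have hc0 : 0 < c := hδ.trans_le hc
  have hM0 : 0 ≤ M := hG0.trans hGM
  have hVn0 : 0 < Vn := hδ.trans_le (hc.trans hcV)
  have hC0 : 0 < C := arith0 δ M Vn C hδ hM0 (hc.trans hcV) hC
  rw [← mul_le_mul_iff_right₀ hc0]
  have hdiv : c * (ε/c*A) = ε*A := by field_simp
  have expand : c * ((C*ε^2 + ε/c*A)*n) = C*ε^2*(c*n) + (c*(ε/c*A))*n := by ring
  rw [expand, hdiv]
  -- need: c*(ε*A + ε²*G²) ≤ C*ε²*(c*n) + ε*A*n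
  have p1 : ε*A*(c - ε*G) ≤ ε*A*n := mul_le_mul_of_nonneg_left hnlow (by positivity)
  -- suffices: c*ε²G² + ε²*A*G ≤ C*ε²*c*n
  have key : c*G^2 + A*G ≤ C*(c*n) := by
    have h1 : C*(δ*(δ/2)) ≤ C*(c*n) := by
      apply mul_le_mul_of_nonneg_left (mul_le_mul hc hn (by positivity) hc0.le) hC0.le
    have hG2 : G^2 ≤ M^2 := by nlinarith
    have h2 : c*G^2 ≤ Vn*M^2 := mul_le_mul hcV hG2 (sq_nonneg G) hVn0.le
    have h3 : A*G ≤ 3*M*Vn*M := mul_le_mul hA hGM hG0 (by positivity)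
    nlinarith [sq_nonneg (M+1), mul_nonneg hM0 hVn0.le, sq_nonneg M,
      mul_nonneg (mul_nonneg hM0 hM0) hVn0.le]
  nlinarith [mul_le_mul_of_nonneg_right key (by positivity : (0:ℝ) ≤ ε^2)]

/-- the key linear-algebra estimate of the improvement of flatness. -/
theorem improvement_direction_estimate
    (d : ℕ) (ν V g W : E d) (hν : ‖ν‖ = 1) (δ M : ℝ) (hδ : 0 < δ)
    (hc : δ ≤ ⟪V, ν⟫) (hM : ‖g‖ ≤ M)
    (hW : W = (2 * ⟪V, ν⟫) • ν - V) :
    ∃ C > 0, ∃ ε₀ > 0, ∀ ε : ℝ, 0 < ε → ε < ε₀ →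
      (‖newDir V ν g ε - ν‖ ≤ C * ε) ∧
      (‖⟪V, newDir V ν g ε⟫ • newDir V ν g ε - ⟪V, ν⟫ • ν - ε • g‖ ≤
        C * ε ^ 2 + (ε / ⟪V, ν⟫) * |⟪g, W⟫|) ∧
      (⟪g, W⟫ = 0 →
        Tendsto (fun ε' : ℝ =>
            ‖⟪V, newDir V ν g ε'⟫ • newDir V ν g ε' - ⟪V, ν⟫ • ν - ε' • g‖ / ε')
          (𝓝[>] 0) (𝓝 0)) := by
  have hc0 : 0 < ⟪V, ν⟫ := hδ.trans_le hc
  have hM0 : 0 ≤ M := (norm_nonneg g).trans hM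
  have hcV : ⟪V, ν⟫ ≤ ‖V‖ := by
    have h := real_inner_le_norm V ν
    rwa [hν, mul_one] at h
  have hVδ : δ ≤ ‖V‖ := hc.trans hcV
  have hA : |⟪g, W⟫| ≤ 3 * M * ‖V‖ := by
    have h2 : ‖W‖ ≤ 3 * ‖V‖ := by
      rw [hW]
      calc ‖(2 * ⟪V, ν⟫) • ν - V‖ ≤ ‖(2 * ⟪V, ν⟫) • ν‖ + ‖V‖ := norm_sub_le _ _
        _ = 2 * ⟪V, ν⟫ + ‖V‖ := by
            rw [norm_smul, hν, mul_one, Real.norm_eq_abs, abs_of_pos (by linarith)]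
        _ ≤ 3 * ‖V‖ := by linarith
    calc |⟪g, W⟫| ≤ ‖g‖ * ‖W‖ := abs_real_inner_le_norm g W
      _ ≤ M * (3 * ‖V‖) := mul_le_mul hM h2 (norm_nonneg W) hM0
      _ = 3 * M * ‖V‖ := by ring
  set C : ℝ := (4*(M+1) + 8*(M+1)^2*(‖V‖+1)) / δ^2 with hCdef
  have hCineq : 4*(M+1) + 8*(M+1)^2*(‖V‖+1) ≤ C*δ^2 := by
    rw [hCdef, div_mul_cancel₀ _ (by positivity : (δ:ℝ)^2 ≠ 0)]
  have hCpos : 0 < C := by rw [hCdef]; positivity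
  refine ⟨C, hCpos, δ/(2*(M+1)), by positivity, ?_⟩
  have main : ∀ ε : ℝ, 0 < ε → ε < δ/(2*(M+1)) →
      (‖newDir V ν g ε - ν‖ ≤ C * ε) ∧
      (‖⟪V, newDir V ν g ε⟫ • newDir V ν g ε - ⟪V, ν⟫ • ν - ε • g‖ ≤
        C * ε ^ 2 + (ε / ⟪V, ν⟫) * |⟪g, W⟫|) := by
    intro ε hε hεlt
    have hεg : ε * ‖g‖ < δ/2 := by
      have h := (lt_div_iff₀ (by positivity : (0:ℝ) < 2*(M+1))).mp hεlt
      nlinarith [norm_nonneg g, mul_le_mul_of_nonneg_left hM hε.le]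
    have hcνnorm : ‖⟪V, ν⟫ • ν‖ = ⟪V, ν⟫ := by
      rw [norm_smul, hν, mul_one, Real.norm_eq_abs, abs_of_pos hc0]
    have hεgnorm : ‖ε • g‖ = ε * ‖g‖ := by
      rw [norm_smul, Real.norm_eq_abs, abs_of_pos hε]
    have hnlow : ⟪V, ν⟫ - ε * ‖g‖ ≤ ‖⟪V, ν⟫ • ν + ε • g‖ := by
      have h := norm_add_le (⟪V, ν⟫ • ν + ε • g) (-(ε • g))
      rw [add_neg_cancel_right, norm_neg, hεgnorm, hcνnorm] at h
      linarith
    have hnδ : δ/2 ≤ ‖⟪V, ν⟫ • ν + ε • g‖ := by linarith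
    have hn : (0:ℝ) < ‖⟪V, ν⟫ • ν + ε • g‖ := by linarith
    constructor
    · -- part (i)
      have hrw : newDir V ν g ε - ν
          = ‖⟪V, ν⟫ • ν + ε • g‖⁻¹ • ((⟪V, ν⟫ • ν + ε • g) - ‖⟪V, ν⟫ • ν + ε • g‖ • ν) := by
        rw [smul_sub, smul_smul, inv_mul_cancel₀ hn.ne', one_smul]; rfl
      rw [hrw, norm_smul, Real.norm_eq_abs, abs_of_pos (inv_pos.mpr hn)]
      have habs : |⟪V, ν⟫ - ‖⟪V, ν⟫ • ν + ε • g‖| ≤ ε * ‖g‖ := by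
        have h := abs_norm_sub_norm_le (⟪V, ν⟫ • ν) (⟪V, ν⟫ • ν + ε • g)
        rw [hcνnorm] at h
        have he : ⟪V, ν⟫ • ν - (⟪V, ν⟫ • ν + ε • g) = -(ε • g) := by module
        rw [he, norm_neg, hεgnorm] at h
        exact h
      have hdiff : (⟪V, ν⟫ • ν + ε • g) - ‖⟪V, ν⟫ • ν + ε • g‖ • ν
          = (⟪V, ν⟫ - ‖⟪V, ν⟫ • ν + ε • g‖) • ν + ε • g := by module
      have hbound : ‖(⟪V, ν⟫ • ν + ε • g) - ‖⟪V, ν⟫ • ν + ε • g‖ • ν‖ ≤ 2 * (ε * ‖g‖) := by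
        rw [hdiff]
        calc ‖(⟪V, ν⟫ - ‖⟪V, ν⟫ • ν + ε • g‖) • ν + ε • g‖
            ≤ ‖(⟪V, ν⟫ - ‖⟪V, ν⟫ • ν + ε • g‖) • ν‖ + ‖ε • g‖ := norm_add_le _ _
          _ = |⟪V, ν⟫ - ‖⟪V, ν⟫ • ν + ε • g‖| + ε * ‖g‖ := by
              rw [norm_smul, hν, mul_one, Real.norm_eq_abs, hεgnorm]
          _ ≤ 2 * (ε * ‖g‖) := by linarith
      calc ‖⟪V, ν⟫ • ν + ε • g‖⁻¹ * ‖(⟪V, ν⟫ • ν + ε • g) - ‖⟪V, ν⟫ • ν + ε • g‖ • ν‖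
          ≤ ‖⟪V, ν⟫ • ν + ε • g‖⁻¹ * (2 * (ε * ‖g‖)) :=
            mul_le_mul_of_nonneg_left hbound (inv_nonneg.mpr hn.le)
        _ ≤ C * ε := by
            rw [inv_mul_le_iff₀ hn]
            have := arith1 δ M ‖V‖ ‖g‖ C ε ‖⟪V, ν⟫ • ν + ε • g‖ hδ (norm_nonneg g) hM
              hVδ hnδ hε hCineq
            linarith [this]
    · -- part (ii)
      rw [norm_diff_eq ν V g ε hn, numerator_eq ν V g W hν hW ε, abs_neg]
      rw [div_le_iff₀ hn]
      have habs : |ε * ⟪g, W⟫ + ε ^ 2 * ‖g‖ ^ 2| ≤ ε * |⟪g, W⟫| + ε ^ 2 * ‖g‖ ^ 2 := by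
        calc |ε * ⟪g, W⟫ + ε ^ 2 * ‖g‖ ^ 2| ≤ |ε * ⟪g, W⟫| + |ε ^ 2 * ‖g‖ ^ 2| := abs_add_le _ _
          _ = ε * |⟪g, W⟫| + ε ^ 2 * ‖g‖ ^ 2 := by
              rw [abs_mul, abs_of_pos hε, abs_of_nonneg (by positivity : (0:ℝ) ≤ ε ^ 2 * ‖g‖ ^ 2)]
      have h2 := arith2 δ M ‖V‖ ⟪V, ν⟫ ‖⟪V, ν⟫ • ν + ε • g‖ |⟪g, W⟫| ‖g‖ C ε hδ hc hcV
        (norm_nonneg g) hM (abs_nonneg _) hA hnδ hnlow hε hCineq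
      calc |ε * ⟪g, W⟫ + ε ^ 2 * ‖g‖ ^ 2| ≤ ε * |⟪g, W⟫| + ε ^ 2 * ‖g‖ ^ 2 := habs
        _ ≤ (C * ε ^ 2 + ε / ⟪V, ν⟫ * |⟪g, W⟫|) * ‖⟪V, ν⟫ • ν + ε • g‖ := h2
  intro ε hε hεlt
  refine ⟨(main ε hε hεlt).1, (main ε hε hεlt).2, ?_⟩
  intro hgW0
  have htend : Tendsto (fun x : ℝ => C * x) (𝓝[>] (0:ℝ)) (𝓝 0) := by
    have h : Tendsto (fun x : ℝ => C * x) (𝓝 (0:ℝ)) (𝓝 (C * 0)) :=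
      (continuous_const.mul continuous_id).tendsto 0
    rw [mul_zero] at h
    exact h.mono_left nhdsWithin_le_nhds
  apply squeeze_zero' ?_ ?_ htend
  · filter_upwards [self_mem_nhdsWithin] with x hx
    have hx0 : (0:ℝ) < x := hx
    positivity
  · have hmem : Ioo (0:ℝ) (δ/(2*(M+1))) ∈ 𝓝[>] (0:ℝ) :=
      Ioo_mem_nhdsGT_of_mem ⟨le_refl 0, by positivity⟩
    filter_upwards [hmem] with x hx
    have h := (main x hx.1 hx.2).2
    rw [hgW0, abs_zero, mul_zero, add_zero] at h
    rw [div_le_iff₀ hx.1]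
    nlinarith [h]
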